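/- Let G be a group, A an abelian group, and 1 \to A \to G \to Q \to 1 a central extension (more generally, let Q = G/Z where Z \le Z(G)). Then the quotient map p : G \to Q induces an isomorphism p^* : H_b^2(Q) \to H_b^2(G) on second bounded cohomology, injectivity holding because a bounded 2-cocycle pulled back from Q that is a bounded coboundary on G is already a bounded coboundary on Q (using homogeneity and amenability of the kernel via an invariant mean). -/

import Mathlib

section

variable {G : Type*} [Group G]

/-- Homogeneous 2-cochains. -/
def IsHomog2 (c : G → G → G → ℝ) : Prop :=
  ∀ h g₀ g₁ g₂ : G, c (g₀ * h) (g₁ * h) (g₂ * h) = c g₀ g₁ g₂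

/-- Homogeneous 1-cochains. -/
def IsHomog1 (b : G → G → ℝ) : Prop :=
  ∀ h g₀ g₁ : G, b (g₀ * h) (g₁ * h) = b g₀ g₁

/-- Bounded 2-cochains. -/
def Bdd2 (c : G → G → G → ℝ) : Prop := ∃ C : ℝ, ∀ g₀ g₁ g₂, |c g₀ g₁ g₂| ≤ C

/-- Bounded 1-cochains. -/
def Bdd1 (b : G → G → ℝ) : Prop := ∃ C : ℝ, ∀ g₀ g₁, |b g₀ g₁| ≤ C

/-- Coboundary of a homogeneous 1-cochain. -/
def d1 (b : G → G → ℝ) : G → G → G → ℝ := fun g₀ g₁ g₂ => b g₁ g₂ - b g₀ g₂ + b g₀ g₁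

/-- Coboundary of a homogeneous 2-cochain. -/
def d2 (c : G → G → G → ℝ) : G → G → G → G → ℝ :=
  fun g₀ g₁ g₂ g₃ => c g₁ g₂ g₃ - c g₀ g₂ g₃ + c g₀ g₁ g₃ - c g₀ g₁ g₂

end

open Filter Topology

namespace MT2

open scoped Classical

variable {H : Type*} [CommGroup H]

noncomputable section

/-- Product over a "cube": exponents `a s < n` on generators `s ∈ S`. -/
def cubeProd (S : Finset H) (n : ℕ) (a : {x // x ∈ S} → Fin n) : H :=
  ∏ s : {x // x ∈ S}, (s : H) ^ ((a s : ℕ))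

/-- Average of `f` over the cube indexed by `p = (S, n)`. -/
def avg (f : H → ℝ) (p : Finset H × ℕ) : ℝ :=
  (∑ a : ({x // x ∈ p.1} → Fin p.2), f (cubeProd p.1 p.2 a)) /
    (Fintype.card ({x // x ∈ p.1} → Fin p.2) : ℝ)

/-- An ultrafilter refining the directed order on `(S, n)`. -/
def U : Ultrafilter (Finset H × ℕ) := Ultrafilter.of atTop

lemma avg_abs_le {f : H → ℝ} {C : ℝ} (hC : ∀ z, |f z| ≤ C) (p : Finset H × ℕ) :
    |avg f p| ≤ C := by
  have hC0 : 0 ≤ C := (abs_nonneg _).trans (hC 1)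
  set N := Fintype.card ({x // x ∈ p.1} → Fin p.2) with hN
  have h1 : |∑ a : ({x // x ∈ p.1} → Fin p.2), f (cubeProd p.1 p.2 a)| ≤ (N : ℝ) * C := by
    calc |∑ a : ({x // x ∈ p.1} → Fin p.2), f (cubeProd p.1 p.2 a)|
        ≤ ∑ a : ({x // x ∈ p.1} → Fin p.2), |f (cubeProd p.1 p.2 a)| :=
          Finset.abs_sum_le_sum_abs _ _
      _ ≤ ∑ _a : ({x // x ∈ p.1} → Fin p.2), C := Finset.sum_le_sum fun a _ => hC _
      _ = (N : ℝ) * C := by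
          rw [Finset.sum_const, Finset.card_univ, nsmul_eq_mul, ← hN]
  rcases Nat.eq_zero_or_pos N with h | h
  · rw [avg, ← hN, h]
    simp only [Nat.cast_zero, div_zero, abs_zero]
    exact hC0
  · have hNpos : (0:ℝ) < N := by exact_mod_cast h
    rw [avg, abs_div, abs_of_pos hNpos, div_le_iff₀ hNpos]
    simpa [mul_comm] using h1

lemma exists_mean_tendsto {f : H → ℝ} (h : ∃ C, ∀ z, |f z| ≤ C) :
    ∃ x, Tendsto (avg f) (U (H := H) : Filter _) (𝓝 x) := by
  obtain ⟨C, hC⟩ := h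
  have hsub : ((U (H := H)).map (avg f) : Filter ℝ) ≤ 𝓟 (Set.Icc (-C) C) := by
    rw [le_principal_iff]
    have : ∀ p, avg f p ∈ Set.Icc (-C) C := fun p => by
      have := avg_abs_le hC p
      exact Set.mem_Icc.2 ⟨neg_le_of_abs_le this, le_of_abs_le this⟩
    exact Filter.mem_map.2 (Filter.univ_mem' this)
  obtain ⟨x, -, hx⟩ := (isCompact_Icc (a := -C) (b := C)).ultrafilter_le_nhds
    ((U (H := H)).map (avg f)) hsub
  exact ⟨x, hx⟩

/-- Invariant mean on a commutative group. -/
def mean (f : H → ℝ) : ℝ :=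
  if h : ∃ C, ∀ z, |f z| ≤ C then (exists_mean_tendsto h).choose else 0

lemma mean_tendsto {f : H → ℝ} (h : ∃ C, ∀ z, |f z| ≤ C) :
    Tendsto (avg f) (U (H := H) : Filter _) (𝓝 (mean f)) := by
  rw [mean, dif_pos h]
  exact (exists_mean_tendsto h).choose_spec

lemma mean_abs_le {f : H → ℝ} {C : ℝ} (hC : ∀ z, |f z| ≤ C) : |mean f| ≤ C := by
  have ht := mean_tendsto ⟨C, hC⟩
  have h1 : mean f ≤ C :=
    le_of_tendsto ht (Filter.Eventually.of_forall fun p => le_of_abs_le (avg_abs_le hC p))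
  have h2 : -C ≤ mean f :=
    ge_of_tendsto ht (Filter.Eventually.of_forall fun p => neg_le_of_abs_le (avg_abs_le hC p))
  exact abs_le.2 ⟨h2, h1⟩

lemma mean_add {f g : H → ℝ} (hf : ∃ C, ∀ z, |f z| ≤ C) (hg : ∃ C, ∀ z, |g z| ≤ C) :
    mean (fun z => f z + g z) = mean f + mean g := by
  obtain ⟨Cf, hCf⟩ := hf
  obtain ⟨Cg, hCg⟩ := hg
  have hfg : ∃ C, ∀ z, |f z + g z| ≤ C :=
    ⟨Cf + Cg, fun z => (abs_add_le _ _).trans (add_le_add (hCf z) (hCg z))⟩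
  refine tendsto_nhds_unique (mean_tendsto hfg) ?_
  have h1 := (mean_tendsto ⟨Cf, hCf⟩).add (mean_tendsto ⟨Cg, hCg⟩)
  have h2 : (fun p => avg f p + avg g p) = avg (fun z => f z + g z) := by
    funext p
    rw [avg, avg, avg, ← add_div, ← Finset.sum_add_distrib]
  rwa [h2] at h1

lemma mean_neg {f : H → ℝ} (hf : ∃ C, ∀ z, |f z| ≤ C) :
    mean (fun z => -f z) = -mean f := by
  obtain ⟨Cf, hCf⟩ := hf
  have hnf : ∃ C, ∀ z, |(-f z)| ≤ C := ⟨Cf, fun z => by rw [abs_neg]; exact hCf z⟩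
  refine tendsto_nhds_unique (mean_tendsto hnf) ?_
  have h1 := (mean_tendsto ⟨Cf, hCf⟩).neg
  have h2 : (fun p => -avg f p) = avg (fun z => -f z) := by
    funext p
    rw [avg, avg, ← neg_div, ← Finset.sum_neg_distrib]
  rwa [h2] at h1

lemma mean_sub {f g : H → ℝ} (hf : ∃ C, ∀ z, |f z| ≤ C) (hg : ∃ C, ∀ z, |g z| ≤ C) :
    mean (fun z => f z - g z) = mean f - mean g := by
  obtain ⟨Cg, hCg⟩ := hg
  have h1 : mean (fun z => f z + -g z) = mean f + mean (fun z => -g z) :=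
    mean_add hf ⟨Cg, fun z => by rw [abs_neg]; exact hCg z⟩
  rw [mean_neg ⟨Cg, hCg⟩] at h1
  simpa [sub_eq_add_neg] using h1

lemma mean_const (r : ℝ) : mean (fun _ : H => r) = r := by
  refine tendsto_nhds_unique (mean_tendsto ⟨|r|, fun _ => le_rfl⟩) ?_
  have hev : avg (fun _ : H => r) =ᶠ[(U (H := H) : Filter _)] (fun _ => r) := by
    have hmem : ∀ᶠ p in (atTop : Filter (Finset H × ℕ)), avg (fun _ : H => r) p = r := by
      rw [eventually_atTop]
      refine ⟨(∅, 1), fun p hp => ?_⟩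
      have hp2 : 1 ≤ p.2 := hp.2
      have : Nonempty ({x // x ∈ p.1} → Fin p.2) := ⟨fun _ => ⟨0, hp2⟩⟩
      have hcard : (Fintype.card ({x // x ∈ p.1} → Fin p.2) : ℝ) ≠ 0 := by
        exact_mod_cast Fintype.card_ne_zero
      rw [avg, Finset.sum_const, Finset.card_univ, nsmul_eq_mul]
      exact mul_div_cancel_left₀ r hcard
    exact (Ultrafilter.of_le _) hmem
  exact Tendsto.congr' hev.symm tendsto_const_nhds


lemma avg_translate_sub {f : H → ℝ} {C : ℝ} (hC : ∀ z, |f z| ≤ C) {w : H} {S : Finset H}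
    {n : ℕ} (hw : w ∈ S) (hn : 1 ≤ n) :
    |avg (fun z => f (w * z)) (S, n) - avg f (S, n)| ≤ 2 * C / n := by
  classical
  have hC0 : 0 ≤ C := (abs_nonneg _).trans (hC 1)
  set e : {x // x ∈ S} := ⟨w, hw⟩ with he
  set E := Equiv.funSplitAt e (Fin n) with hE
  set Q : ({j : {x // x ∈ S} // j ≠ e} → Fin n) → H :=
    fun r => ∏ j : {j : {x // x ∈ S} // j ≠ e}, ((j : {x // x ∈ S}) : H) ^ ((r j : ℕ)) with hQ
  have key : ∀ (k : Fin n) (r), cubeProd S n (E.symm (k, r)) = w ^ (k : ℕ) * Q r := by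
    intro k r
    rw [cubeProd, Fintype.prod_eq_mul_prod_compl e]
    have h1 : E.symm (k, r) e = k := by
      simp [hE, Equiv.funSplitAt, Equiv.piSplitAt]
    have h2 : (∏ i ∈ ({e}ᶜ : Finset _), ((i : H) ^ ((E.symm (k, r) i : ℕ))))
        = Q r := by
      rw [Finset.prod_subtype (p := fun j => j ≠ e) ({e}ᶜ : Finset _) (fun x => by simp)
        (fun i => ((i : H) ^ ((E.symm (k, r) i : ℕ))))]
      refine Finset.prod_congr rfl fun j _ => ?_
      have hj : E.symm (k, r) (j : {x // x ∈ S}) = r j := by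
        simp [hE, Equiv.funSplitAt, Equiv.piSplitAt, j.2]
      rw [hj]
    rw [h1, h2, he]
  have sum1 : ∀ φ : H → ℝ, (∑ a : ({x // x ∈ S} → Fin n), φ (cubeProd S n a))
      = ∑ r : ({j : {x // x ∈ S} // j ≠ e} → Fin n), ∑ k : Fin n, φ (w ^ (k : ℕ) * Q r) := by
    intro φ
    rw [← Equiv.sum_comp E.symm (fun a => φ (cubeProd S n a)), Fintype.sum_prod_type,
      Finset.sum_comm]
    exact Finset.sum_congr rfl fun r _ => Finset.sum_congr rfl fun k _ => by rw [key]
  have htele : ∀ r, ((∑ k : Fin n, f (w * (w ^ (k : ℕ) * Q r)))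
      - ∑ k : Fin n, f (w ^ (k : ℕ) * Q r)) = f (w ^ n * Q r) - f (Q r) := by
    intro r
    have e1 : (∑ k : Fin n, f (w * (w ^ (k : ℕ) * Q r)))
        = ∑ k ∈ Finset.range n, f (w ^ (k + 1) * Q r) := by
      rw [← Fin.sum_univ_eq_sum_range (fun k => f (w ^ (k + 1) * Q r)) n]
      exact Finset.sum_congr rfl fun k _ => by rw [← mul_assoc, ← pow_succ']
    have e2 : (∑ k : Fin n, f (w ^ (k : ℕ) * Q r))
        = ∑ k ∈ Finset.range n, f (w ^ k * Q r) :=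
      Fin.sum_univ_eq_sum_range (fun k => f (w ^ k * Q r)) n
    rw [e1, e2, ← Finset.sum_sub_distrib, Finset.sum_range_sub (fun j => f (w ^ j * Q r)),
      pow_zero, one_mul]
  have hdiff : |(∑ a : ({x // x ∈ S} → Fin n), f (w * cubeProd S n a))
      - ∑ a : ({x // x ∈ S} → Fin n), f (cubeProd S n a)|
      ≤ (Fintype.card ({j : {x // x ∈ S} // j ≠ e} → Fin n) : ℝ) * (2 * C) := by
    rw [sum1 (fun x => f (w * x)), sum1 f, ← Finset.sum_sub_distrib]
    calc |∑ r : ({j : {x // x ∈ S} // j ≠ e} → Fin n),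
            ((∑ k : Fin n, f (w * (w ^ (k : ℕ) * Q r))) - ∑ k : Fin n, f (w ^ (k : ℕ) * Q r))|
        ≤ ∑ r : ({j : {x // x ∈ S} // j ≠ e} → Fin n),
            |(∑ k : Fin n, f (w * (w ^ (k : ℕ) * Q r))) - ∑ k : Fin n, f (w ^ (k : ℕ) * Q r)| :=
          Finset.abs_sum_le_sum_abs _ _
      _ ≤ ∑ _r : ({j : {x // x ∈ S} // j ≠ e} → Fin n), (2 * C) := by
          refine Finset.sum_le_sum fun r _ => ?_
          rw [htele r]
          calc |f (w ^ n * Q r) - f (Q r)| ≤ |f (w ^ n * Q r)| + |f (Q r)| := abs_sub _ _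
            _ ≤ C + C := add_le_add (hC _) (hC _)
            _ = 2 * C := by ring
      _ = (Fintype.card ({j : {x // x ∈ S} // j ≠ e} → Fin n) : ℝ) * (2 * C) := by
          rw [Finset.sum_const, Finset.card_univ, nsmul_eq_mul]
  have hcard : Fintype.card ({x // x ∈ S} → Fin n)
      = n * Fintype.card ({j : {x // x ∈ S} // j ≠ e} → Fin n) := by
    rw [Fintype.card_congr E, Fintype.card_prod, Fintype.card_fin]
  have hne : Nonempty ({x // x ∈ S} → Fin n) := ⟨fun _ => ⟨0, hn⟩⟩
  have hNpos : (0 : ℝ) < (Fintype.card ({x // x ∈ S} → Fin n) : ℝ) := by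
    exact_mod_cast Fintype.card_pos
  have hne' : Nonempty ({j : {x // x ∈ S} // j ≠ e} → Fin n) := ⟨fun _ => ⟨0, hn⟩⟩
  have hN'pos : 0 < Fintype.card ({j : {x // x ∈ S} // j ≠ e} → Fin n) := Fintype.card_pos
  have havg : avg (fun z => f (w * z)) (S, n) - avg f (S, n)
      = ((∑ a : ({x // x ∈ S} → Fin n), f (w * cubeProd S n a))
        - ∑ a : ({x // x ∈ S} → Fin n), f (cubeProd S n a))
        / (Fintype.card ({x // x ∈ S} → Fin n) : ℝ) := by
    rw [avg, avg, div_sub_div_same]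
  rw [havg, abs_div, abs_of_pos hNpos]
  rw [div_le_iff₀ hNpos]
  calc |(∑ a : ({x // x ∈ S} → Fin n), f (w * cubeProd S n a))
      - ∑ a : ({x // x ∈ S} → Fin n), f (cubeProd S n a)|
      ≤ (Fintype.card ({j : {x // x ∈ S} // j ≠ e} → Fin n) : ℝ) * (2 * C) := hdiff
    _ = 2 * C / n * (Fintype.card ({x // x ∈ S} → Fin n) : ℝ) := by
        rw [hcard]
        push_cast
        have hnne : (n : ℝ) ≠ 0 := by positivity
        field_simp

lemma tendsto_bound : Tendsto (fun p : Finset H × ℕ => 2 * C / (p.2 : ℝ))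
    (U (H := H) : Filter _) (𝓝 0) := by
  have h1 : Tendsto (fun p : Finset H × ℕ => p.2) atTop atTop := by
    rw [Filter.tendsto_atTop_atTop]
    exact fun b => ⟨(∅, b), fun p hp => hp.2⟩
  have h2 := (tendsto_const_div_atTop_nhds_zero_nat (2 * C)).comp h1
  exact h2.mono_left (Ultrafilter.of_le _)

lemma mean_translate {f : H → ℝ} (h : ∃ C, ∀ z, |f z| ≤ C) (w : H) :
    mean (fun z => f (w * z)) = mean f := by
  obtain ⟨C, hC⟩ := h
  have hfw : ∃ C', ∀ z, |f (w * z)| ≤ C' := ⟨C, fun z => hC _⟩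
  refine tendsto_nhds_unique (mean_tendsto hfw) ?_
  have hzero : Tendsto (fun p => avg (fun z => f (w * z)) p - avg f p)
      (U (H := H) : Filter _) (𝓝 0) := by
    apply squeeze_zero_norm'
    · have hmem : ∀ᶠ p in (atTop : Filter (Finset H × ℕ)),
          ‖avg (fun z => f (w * z)) p - avg f p‖ ≤ 2 * C / (p.2 : ℝ) := by
        rw [eventually_atTop]
        refine ⟨({w}, 1), fun p hp => ?_⟩
        have hw : w ∈ p.1 := hp.1 (Finset.mem_singleton_self w)
        have hn : 1 ≤ p.2 := hp.2
        have := avg_translate_sub hC hw hn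
        rw [Real.norm_eq_abs]
        calc |avg (fun z => f (w * z)) p - avg f p|
            = |avg (fun z => f (w * z)) (p.1, p.2) - avg f (p.1, p.2)| := by rfl
          _ ≤ 2 * C / (p.2 : ℝ) := this
      exact (Ultrafilter.of_le _) hmem
    · exact tendsto_bound
  have h1 := (mean_tendsto ⟨C, hC⟩).add hzero
  rw [add_zero] at h1
  refine h1.congr fun p => ?_
  ring

lemma mean_const_add (r : ℝ) {f : H → ℝ} (hf : ∃ C, ∀ z, |f z| ≤ C) :
    mean (fun z => r + f z) = r + mean f := by
  rw [mean_add ⟨|r|, fun _ => le_rfl⟩ hf, mean_const]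

lemma comb4 {F1 F2 F3 F4 : H → ℝ} (h1 : ∃ C, ∀ z, |F1 z| ≤ C) (h2 : ∃ C, ∀ z, |F2 z| ≤ C)
    (h3 : ∃ C, ∀ z, |F3 z| ≤ C) (h4 : ∃ C, ∀ z, |F4 z| ≤ C) :
    mean (fun z => F1 z - F2 z + F3 z - F4 z) = mean F1 - mean F2 + mean F3 - mean F4 := by
  obtain ⟨C1, h1⟩ := h1
  obtain ⟨C2, h2⟩ := h2
  obtain ⟨C3, h3⟩ := h3
  have h12 : ∃ C, ∀ z, |F1 z - F2 z| ≤ C :=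
    ⟨C1 + C2, fun z => (abs_sub _ _).trans (add_le_add (h1 z) (h2 z))⟩
  have h123 : ∃ C, ∀ z, |F1 z - F2 z + F3 z| ≤ C := by
    obtain ⟨C12, h12⟩ := h12
    exact ⟨C12 + C3, fun z => (abs_add_le _ _).trans (add_le_add (h12 z) (h3 z))⟩
  rw [mean_sub h123 h4, mean_add h12 ⟨C3, h3⟩, mean_sub ⟨C1, h1⟩ ⟨C2, h2⟩]

end

end MT2

set_option maxHeartbeats 2000000

/-- Degree-2 mapping theorem for a central quotient `p : G → Q = G/Z`, `Z ≤ Z(G)`: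
`p^* : H_b^2(Q) → H_b^2(G)` is an isomorphism, stated at the level of bounded homogeneous
cochains. Injectivity: a bounded 2-cocycle on `Q` whose pullback is a bounded coboundary
on `G` is already a bounded coboundary on `Q`. Surjectivity: every bounded 2-cocycle on
`G` agrees with the pullback of a bounded 2-cocycle on `Q` up to a bounded coboundary. -/
theorem mapping_theorem_degree_two
    {G : Type*} [Group G] (Z : Subgroup G) [Z.Normal] (hZ : Z ≤ Subgroup.center G) :
    (∀ c' : G ⧸ Z → G ⧸ Z → G ⧸ Z → ℝ, IsHomog2 c' → Bdd2 c' →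
        (∀ g₀ g₁ g₂ g₃, d2 c' g₀ g₁ g₂ g₃ = 0) →
        (∃ b : G → G → ℝ, IsHomog1 b ∧ Bdd1 b ∧
          ∀ g₀ g₁ g₂ : G, c' (QuotientGroup.mk g₀) (QuotientGroup.mk g₁) (QuotientGroup.mk g₂)
            = d1 b g₀ g₁ g₂) →
        ∃ b' : G ⧸ Z → G ⧸ Z → ℝ, IsHomog1 b' ∧ Bdd1 b' ∧ ∀ q₀ q₁ q₂, c' q₀ q₁ q₂ = d1 b' q₀ q₁ q₂) ∧
    (∀ c : G → G → G → ℝ, IsHomog2 c → Bdd2 c →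
        (∀ g₀ g₁ g₂ g₃, d2 c g₀ g₁ g₂ g₃ = 0) →
        ∃ (c' : G ⧸ Z → G ⧸ Z → G ⧸ Z → ℝ) (b : G → G → ℝ),
          IsHomog2 c' ∧ Bdd2 c' ∧ (∀ q₀ q₁ q₂ q₃, d2 c' q₀ q₁ q₂ q₃ = 0) ∧
          IsHomog1 b ∧ Bdd1 b ∧
          ∀ g₀ g₁ g₂ : G,
            c g₀ g₁ g₂
              - c' (QuotientGroup.mk g₀) (QuotientGroup.mk g₁) (QuotientGroup.mk g₂)
              = d1 b g₀ g₁ g₂) := by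
  constructor
  ·   intro c' _ _ _ hcobdy
      obtain ⟨b, hbH, ⟨Cb, hCb⟩, hb⟩ := hcobdy
      -- the function β with b x y = β (y * x⁻¹)
      set β : G → ℝ := fun x => b 1 x with hβ
      have hcen : ∀ z ∈ Z, ∀ g : G, g * z = z * g := fun z hz g =>
        Subgroup.mem_center_iff.mp (hZ hz) g
      have hbeq : ∀ x y : G, b x y = β (y * x⁻¹) := by
        intro x y
        have h := hbH x⁻¹ x y
        rw [mul_inv_cancel] at h
        exact h.symm
      -- step: translation defect is independent of the base point
      have step : ∀ a a' z : G, z ∈ Z → β (a * z) - β a = β (a' * z) - β a' := by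
        intro a a' z hz
        have h1 := hb (a'⁻¹ * a) 1 a
        have h2 := hb (a'⁻¹ * a) 1 (a * z)
        rw [QuotientGroup.mk_mul_of_mem a hz] at h2
        have h3 : d1 b (a'⁻¹ * a) 1 a = d1 b (a'⁻¹ * a) 1 (a * z) := by rw [← h1, ← h2]
        simp only [d1] at h3
        have e1 : b 1 a = β a := by rw [hbeq, inv_one, mul_one]
        have e2 : b 1 (a * z) = β (a * z) := by rw [hbeq, inv_one, mul_one]
        have e3 : b (a'⁻¹ * a) a = β a' := by
          rw [hbeq, mul_inv_rev, inv_inv, mul_inv_cancel_left]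
        have e4 : b (a'⁻¹ * a) (a * z) = β (a' * z) := by
          rw [hbeq, mul_inv_rev, inv_inv]
          have : a * z * (a⁻¹ * a') = a' * z := by
            rw [mul_assoc, ← hcen z hz (a⁻¹ * a'), ← mul_assoc, mul_inv_cancel_left]
          rw [this]
        rw [e1, e2, e3, e4] at h3
        linarith
      -- the defect is an additive bounded map on Z, hence zero
      have hβbdd : ∀ x : G, |β x| ≤ Cb := fun x => hCb 1 x
      have hadd : ∀ z ∈ Z, ∀ w ∈ Z, (β (z * w) - β 1) = (β z - β 1) + (β w - β 1) := by
        intro z hz w hw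
        have h := step z 1 w hw
        rw [one_mul] at h
        linarith
      have hpow : ∀ z ∈ Z, ∀ n : ℕ, β (z ^ n) - β 1 = n * (β z - β 1) := by
        intro z hz n
        induction n with
        | zero => simp
        | succ n ih =>
          have hzn : z ^ n ∈ Z := pow_mem hz n
          have := hadd (z ^ n) hzn z hz
          rw [← pow_succ] at this
          push_cast
          rw [this, ih]
          ring
      have hdef0 : ∀ z ∈ Z, β z - β 1 = 0 := by
        intro z hz
        by_contra hne
        have hpos : 0 < |β z - β 1| := abs_pos.mpr hne
        obtain ⟨n, hn⟩ := exists_nat_gt ((2 * Cb) / |β z - β 1|)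
        have hb2 : |β (z ^ n) - β 1| ≤ 2 * Cb := by
          calc |β (z ^ n) - β 1| ≤ |β (z ^ n)| + |β 1| := abs_sub _ _
            _ ≤ Cb + Cb := add_le_add (hβbdd _) (hβbdd _)
            _ = 2 * Cb := by ring
        rw [hpow z hz n, abs_mul, Nat.abs_cast] at hb2
        have h4 : (2 * Cb) / |β z - β 1| < n := hn
        rw [div_lt_iff₀ hpos] at h4
        linarith
      have hβinv : ∀ (a z : G), z ∈ Z → β (a * z) = β a := by
        intro a z hz
        have h := step a 1 z hz
        rw [one_mul] at h
        have := hdef0 z hz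
        linarith
      -- β descends to the quotient
      have hβmk : ∀ g : G, β ((QuotientGroup.mk g : G ⧸ Z).out) = β g := by
        intro g
        have h := QuotientGroup.out_eq' (QuotientGroup.mk g : G ⧸ Z)
        rw [QuotientGroup.eq] at h
        have h2 : (QuotientGroup.mk g : G ⧸ Z).out * (((QuotientGroup.mk g : G ⧸ Z).out)⁻¹ * g)
            = g := mul_inv_cancel_left _ _
        calc β ((QuotientGroup.mk g : G ⧸ Z).out)
            = β ((QuotientGroup.mk g : G ⧸ Z).out * (((QuotientGroup.mk g : G ⧸ Z).out)⁻¹ * g)) :=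
              (hβinv _ _ h).symm
          _ = β g := by rw [h2]
      refine ⟨fun q₀ q₁ => β ((q₁ * q₀⁻¹).out), ?_, ?_, ?_⟩
      · intro h q₀ q₁
        have hqq : q₁ * h * (q₀ * h)⁻¹ = q₁ * q₀⁻¹ := by group
        show β (Quotient.out (q₁ * h * (q₀ * h)⁻¹)) = β (Quotient.out (q₁ * q₀⁻¹))
        rw [hqq]
      · exact ⟨Cb, fun q₀ q₁ => hβbdd _⟩
      · intro q₀ q₁ q₂
        obtain ⟨g₀, rfl⟩ := QuotientGroup.mk_surjective q₀
        obtain ⟨g₁, rfl⟩ := QuotientGroup.mk_surjective q₁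
        obtain ⟨g₂, rfl⟩ := QuotientGroup.mk_surjective q₂
        rw [hb g₀ g₁ g₂]
        have hq : ∀ x y : G,
            β (((QuotientGroup.mk y : G ⧸ Z) * (QuotientGroup.mk x : G ⧸ Z)⁻¹).out) = b x y := by
          intro x y
          have : (QuotientGroup.mk y : G ⧸ Z) * (QuotientGroup.mk x : G ⧸ Z)⁻¹
              = QuotientGroup.mk (y * x⁻¹) := by
            rw [QuotientGroup.mk_mul, QuotientGroup.mk_inv]
          rw [this, hβmk, hbeq]
        simp only [d1]
        rw [hq, hq, hq]
  ·   intro c hH hB hcoc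
      obtain ⟨Cc, hCc⟩ := hB
      letI : CommGroup ↥Z :=
        { (inferInstance : Group ↥Z) with
          mul_comm := fun a b => Subtype.ext (Subgroup.mem_center_iff.mp (hZ b.2) ↑a) }
      have hcen : ∀ (z : ↥Z) (g : G), g * ↑z = ↑z * g := fun z g =>
        Subgroup.mem_center_iff.mp (hZ z.2) g
      have coem : ∀ x y : ↥Z, ((x * y : ↥Z) : G) = (↑x : G) * ↑y := fun x y => rfl
      have mB : ∀ {f : ↥Z → ℝ}, (∀ z, |f z| ≤ Cc) → |MT2.mean f| ≤ Cc :=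
        fun hf => MT2.mean_abs_le hf
      -- the fully averaged cocycle
      set Ab : G → G → G → ℝ := fun g₀ g₁ g₂ =>
        MT2.mean (fun a : ↥Z => MT2.mean (fun b : ↥Z => MT2.mean
          (fun cc : ↥Z => c (g₀ * ↑a) (g₁ * ↑b) (g₂ * ↑cc)))) with hAb
      have hAbB : ∀ g₀ g₁ g₂, |Ab g₀ g₁ g₂| ≤ Cc := fun g₀ g₁ g₂ =>
        mB (fun a => mB (fun b => mB (fun cc => hCc _ _ _)))
      -- slot invariance
      have hAb0 : ∀ (z : ↥Z) (g₀ g₁ g₂ : G), Ab (g₀ * ↑z) g₁ g₂ = Ab g₀ g₁ g₂ := by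
        intro z g₀ g₁ g₂
        have h1 : (fun a : ↥Z => MT2.mean (fun b : ↥Z => MT2.mean
              (fun cc : ↥Z => c (g₀ * ↑z * ↑a) (g₁ * ↑b) (g₂ * ↑cc))))
            = fun a : ↥Z => (fun a' : ↥Z => MT2.mean (fun b : ↥Z => MT2.mean
              (fun cc : ↥Z => c (g₀ * ↑a') (g₁ * ↑b) (g₂ * ↑cc)))) (z * a) := by
          funext a
          have h2 : g₀ * ↑z * ↑a = g₀ * ↑(z * a) := by rw [coem, mul_assoc]
          rw [h2]
        show MT2.mean _ = MT2.mean _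
        rw [h1]
        exact MT2.mean_translate (f := fun a' : ↥Z => MT2.mean (fun b : ↥Z => MT2.mean
          (fun cc : ↥Z => c (g₀ * ↑a') (g₁ * ↑b) (g₂ * ↑cc))))
          ⟨Cc, fun a' => mB (fun b => mB (fun cc => hCc _ _ _))⟩ z
      have hAb1 : ∀ (z : ↥Z) (g₀ g₁ g₂ : G), Ab g₀ (g₁ * ↑z) g₂ = Ab g₀ g₁ g₂ := by
        intro z g₀ g₁ g₂
        show MT2.mean _ = MT2.mean _
        refine congrArg MT2.mean (funext fun a => ?_)
        have h1 : (fun b : ↥Z => MT2.mean (fun cc : ↥Z => c (g₀ * ↑a) (g₁ * ↑z * ↑b) (g₂ * ↑cc)))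
            = fun b : ↥Z => (fun b' : ↥Z => MT2.mean
              (fun cc : ↥Z => c (g₀ * ↑a) (g₁ * ↑b') (g₂ * ↑cc))) (z * b) := by
          funext b
          have h2 : g₁ * ↑z * ↑b = g₁ * ↑(z * b) := by rw [coem, mul_assoc]
          rw [h2]
        rw [h1]
        exact MT2.mean_translate (f := fun b' : ↥Z => MT2.mean
          (fun cc : ↥Z => c (g₀ * ↑a) (g₁ * ↑b') (g₂ * ↑cc)))
          ⟨Cc, fun b' => mB (fun cc => hCc _ _ _)⟩ z
      have hAb2 : ∀ (z : ↥Z) (g₀ g₁ g₂ : G), Ab g₀ g₁ (g₂ * ↑z) = Ab g₀ g₁ g₂ := by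
        intro z g₀ g₁ g₂
        show MT2.mean _ = MT2.mean _
        refine congrArg MT2.mean (funext fun a => congrArg MT2.mean (funext fun b => ?_))
        have h1 : (fun cc : ↥Z => c (g₀ * ↑a) (g₁ * ↑b) (g₂ * ↑z * ↑cc))
            = fun cc : ↥Z => (fun cc' : ↥Z => c (g₀ * ↑a) (g₁ * ↑b) (g₂ * ↑cc')) (z * cc) := by
          funext cc
          have h2 : g₂ * ↑z * ↑cc = g₂ * ↑(z * cc) := by rw [coem, mul_assoc]
          rw [h2]
        rw [h1]
        exact MT2.mean_translate (f := fun cc' : ↥Z => c (g₀ * ↑a) (g₁ * ↑b) (g₂ * ↑cc'))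
          ⟨Cc, fun cc' => hCc _ _ _⟩ z
      -- homogeneity of Ab
      have hmove : ∀ (x h : G) (w : ↥Z), x * h * ↑w = x * ↑w * h := fun x h w => by
        rw [mul_assoc, hcen w h, ← mul_assoc]
      have hAbH : ∀ (h g₀ g₁ g₂ : G), Ab (g₀ * h) (g₁ * h) (g₂ * h) = Ab g₀ g₁ g₂ := by
        intro h g₀ g₁ g₂
        show MT2.mean _ = MT2.mean _
        refine congrArg MT2.mean (funext fun a => congrArg MT2.mean (funext fun b =>
          congrArg MT2.mean (funext fun cc => ?_)))
        rw [hmove g₀ h a, hmove g₁ h b, hmove g₂ h cc]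
        exact hH h _ _ _
      -- Ab only depends on cosets
      have hmk1 : ∀ x y g₁ g₂ : G, (QuotientGroup.mk x : G ⧸ Z) = QuotientGroup.mk y →
          Ab x g₁ g₂ = Ab y g₁ g₂ := by
        intro x y g₁ g₂ h
        have hz : x⁻¹ * y ∈ Z := QuotientGroup.eq.mp h
        have : y = x * ((⟨x⁻¹ * y, hz⟩ : ↥Z) : G) := by
          show y = x * (x⁻¹ * y); rw [mul_inv_cancel_left]
        rw [this, hAb0]
      have hmk2 : ∀ x y g₀ g₂ : G, (QuotientGroup.mk x : G ⧸ Z) = QuotientGroup.mk y →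
          Ab g₀ x g₂ = Ab g₀ y g₂ := by
        intro x y g₀ g₂ h
        have hz : x⁻¹ * y ∈ Z := QuotientGroup.eq.mp h
        have : y = x * ((⟨x⁻¹ * y, hz⟩ : ↥Z) : G) := by
          show y = x * (x⁻¹ * y); rw [mul_inv_cancel_left]
        rw [this, hAb1]
      have hmk3 : ∀ x y g₀ g₁ : G, (QuotientGroup.mk x : G ⧸ Z) = QuotientGroup.mk y →
          Ab g₀ g₁ x = Ab g₀ g₁ y := by
        intro x y g₀ g₁ h
        have hz : x⁻¹ * y ∈ Z := QuotientGroup.eq.mp h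
        have : y = x * ((⟨x⁻¹ * y, hz⟩ : ↥Z) : G) := by
          show y = x * (x⁻¹ * y); rw [mul_inv_cancel_left]
        rw [this, hAb2]
      -- c' on the quotient
      set c'f : G ⧸ Z → G ⧸ Z → G ⧸ Z → ℝ := fun q₀ q₁ q₂ => Ab q₀.out q₁.out q₂.out with hc'f
      have hc'mk : ∀ g₀ g₁ g₂ : G,
          c'f (QuotientGroup.mk g₀) (QuotientGroup.mk g₁) (QuotientGroup.mk g₂) = Ab g₀ g₁ g₂ := by
        intro g₀ g₁ g₂
        show Ab (QuotientGroup.mk g₀ : G ⧸ Z).out (QuotientGroup.mk g₁ : G ⧸ Z).out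
          (QuotientGroup.mk g₂ : G ⧸ Z).out = Ab g₀ g₁ g₂
        rw [hmk1 (QuotientGroup.mk g₀ : G ⧸ Z).out g₀ _ _ (QuotientGroup.out_eq' _),
          hmk2 (QuotientGroup.mk g₁ : G ⧸ Z).out g₁ g₀ _ (QuotientGroup.out_eq' _),
          hmk3 (QuotientGroup.mk g₂ : G ⧸ Z).out g₂ g₀ g₁ (QuotientGroup.out_eq' _)]
      -- Ab is a cocycle
      have hAbcoc : ∀ g₀ g₁ g₂ g₃ : G,
          Ab g₁ g₂ g₃ - Ab g₀ g₂ g₃ + Ab g₀ g₁ g₃ - Ab g₀ g₁ g₂ = 0 := by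
        intro g₀ g₁ g₂ g₃
        have L4 : ∀ α β γ : ↥Z,
            MT2.mean (fun δ : ↥Z => c (g₁ * ↑β) (g₂ * ↑γ) (g₃ * ↑δ))
              - MT2.mean (fun δ : ↥Z => c (g₀ * ↑α) (g₂ * ↑γ) (g₃ * ↑δ))
              + MT2.mean (fun δ : ↥Z => c (g₀ * ↑α) (g₁ * ↑β) (g₃ * ↑δ))
              - MT2.mean (fun _δ : ↥Z => c (g₀ * ↑α) (g₁ * ↑β) (g₂ * ↑γ)) = 0 := by
          intro α β γ
          refine ((MT2.comb4 ⟨Cc, fun _ => hCc _ _ _⟩ ⟨Cc, fun _ => hCc _ _ _⟩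
            ⟨Cc, fun _ => hCc _ _ _⟩ ⟨Cc, fun _ => hCc _ _ _⟩).symm.trans ?_)
          show MT2.mean (fun δ : ↥Z => c (g₁ * ↑β) (g₂ * ↑γ) (g₃ * ↑δ)
              - c (g₀ * ↑α) (g₂ * ↑γ) (g₃ * ↑δ) + c (g₀ * ↑α) (g₁ * ↑β) (g₃ * ↑δ)
              - c (g₀ * ↑α) (g₁ * ↑β) (g₂ * ↑γ)) = 0
          have h0 : (fun δ : ↥Z => c (g₁ * ↑β) (g₂ * ↑γ) (g₃ * ↑δ)
              - c (g₀ * ↑α) (g₂ * ↑γ) (g₃ * ↑δ) + c (g₀ * ↑α) (g₁ * ↑β) (g₃ * ↑δ)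
              - c (g₀ * ↑α) (g₁ * ↑β) (g₂ * ↑γ)) = fun _ => (0 : ℝ) := by
            funext δ
            have h := hcoc (g₀ * ↑α) (g₁ * ↑β) (g₂ * ↑γ) (g₃ * ↑δ)
            simpa [d2] using h
          rw [h0]
          exact MT2.mean_const 0
        have L3 : ∀ α β : ↥Z,
            MT2.mean (fun γ : ↥Z => MT2.mean (fun δ : ↥Z => c (g₁ * ↑β) (g₂ * ↑γ) (g₃ * ↑δ)))
              - MT2.mean (fun γ : ↥Z => MT2.mean (fun δ : ↥Z => c (g₀ * ↑α) (g₂ * ↑γ) (g₃ * ↑δ)))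
              + MT2.mean (fun _γ : ↥Z => MT2.mean (fun δ : ↥Z => c (g₀ * ↑α) (g₁ * ↑β) (g₃ * ↑δ)))
              - MT2.mean (fun γ : ↥Z => MT2.mean (fun _δ : ↥Z => c (g₀ * ↑α) (g₁ * ↑β) (g₂ * ↑γ)))
              = 0 := by
          intro α β
          refine ((MT2.comb4 ⟨Cc, fun _ => mB fun _ => hCc _ _ _⟩
            ⟨Cc, fun _ => mB fun _ => hCc _ _ _⟩ ⟨Cc, fun _ => mB fun _ => hCc _ _ _⟩
            ⟨Cc, fun _ => mB fun _ => hCc _ _ _⟩).symm.trans ?_)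
          show MT2.mean (fun γ : ↥Z =>
              MT2.mean (fun δ : ↥Z => c (g₁ * ↑β) (g₂ * ↑γ) (g₃ * ↑δ))
              - MT2.mean (fun δ : ↥Z => c (g₀ * ↑α) (g₂ * ↑γ) (g₃ * ↑δ))
              + MT2.mean (fun δ : ↥Z => c (g₀ * ↑α) (g₁ * ↑β) (g₃ * ↑δ))
              - MT2.mean (fun _δ : ↥Z => c (g₀ * ↑α) (g₁ * ↑β) (g₂ * ↑γ))) = 0
          have h0 : (fun γ : ↥Z =>
              MT2.mean (fun δ : ↥Z => c (g₁ * ↑β) (g₂ * ↑γ) (g₃ * ↑δ))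
              - MT2.mean (fun δ : ↥Z => c (g₀ * ↑α) (g₂ * ↑γ) (g₃ * ↑δ))
              + MT2.mean (fun δ : ↥Z => c (g₀ * ↑α) (g₁ * ↑β) (g₃ * ↑δ))
              - MT2.mean (fun _δ : ↥Z => c (g₀ * ↑α) (g₁ * ↑β) (g₂ * ↑γ))) = fun _ => (0 : ℝ) :=
            funext fun γ => L4 α β γ
          rw [h0]
          exact MT2.mean_const 0
        have L2 : ∀ α : ↥Z,
            MT2.mean (fun β : ↥Z =>
                MT2.mean (fun γ : ↥Z => MT2.mean (fun δ : ↥Z => c (g₁ * ↑β) (g₂ * ↑γ) (g₃ * ↑δ))))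
              - MT2.mean (fun _β : ↥Z =>
                MT2.mean (fun γ : ↥Z => MT2.mean (fun δ : ↥Z => c (g₀ * ↑α) (g₂ * ↑γ) (g₃ * ↑δ))))
              + MT2.mean (fun β : ↥Z =>
                MT2.mean (fun _γ : ↥Z => MT2.mean (fun δ : ↥Z => c (g₀ * ↑α) (g₁ * ↑β) (g₃ * ↑δ))))
              - MT2.mean (fun β : ↥Z =>
                MT2.mean (fun γ : ↥Z => MT2.mean (fun _δ : ↥Z => c (g₀ * ↑α) (g₁ * ↑β) (g₂ * ↑γ))))
              = 0 := by
          intro α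
          refine ((MT2.comb4 ⟨Cc, fun _ => mB fun _ => mB fun _ => hCc _ _ _⟩
            ⟨Cc, fun _ => mB fun _ => mB fun _ => hCc _ _ _⟩
            ⟨Cc, fun _ => mB fun _ => mB fun _ => hCc _ _ _⟩
            ⟨Cc, fun _ => mB fun _ => mB fun _ => hCc _ _ _⟩).symm.trans ?_)
          show MT2.mean (fun β : ↥Z =>
              MT2.mean (fun γ : ↥Z => MT2.mean (fun δ : ↥Z => c (g₁ * ↑β) (g₂ * ↑γ) (g₃ * ↑δ)))
              - MT2.mean (fun γ : ↥Z => MT2.mean (fun δ : ↥Z => c (g₀ * ↑α) (g₂ * ↑γ) (g₃ * ↑δ)))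
              + MT2.mean (fun _γ : ↥Z => MT2.mean (fun δ : ↥Z => c (g₀ * ↑α) (g₁ * ↑β) (g₃ * ↑δ)))
              - MT2.mean (fun γ : ↥Z => MT2.mean (fun _δ : ↥Z => c (g₀ * ↑α) (g₁ * ↑β) (g₂ * ↑γ))))
              = 0
          have h0 : (fun β : ↥Z =>
              MT2.mean (fun γ : ↥Z => MT2.mean (fun δ : ↥Z => c (g₁ * ↑β) (g₂ * ↑γ) (g₃ * ↑δ)))
              - MT2.mean (fun γ : ↥Z => MT2.mean (fun δ : ↥Z => c (g₀ * ↑α) (g₂ * ↑γ) (g₃ * ↑δ)))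
              + MT2.mean (fun _γ : ↥Z => MT2.mean (fun δ : ↥Z => c (g₀ * ↑α) (g₁ * ↑β) (g₃ * ↑δ)))
              - MT2.mean (fun γ : ↥Z => MT2.mean (fun _δ : ↥Z => c (g₀ * ↑α) (g₁ * ↑β) (g₂ * ↑γ))))
              = fun _ => (0 : ℝ) :=
            funext fun β => L3 α β
          rw [h0]
          exact MT2.mean_const 0
        have e1 : Ab g₁ g₂ g₃ = MT2.mean (fun _α : ↥Z => MT2.mean (fun β : ↥Z =>
            MT2.mean (fun γ : ↥Z => MT2.mean (fun δ : ↥Z => c (g₁ * ↑β) (g₂ * ↑γ) (g₃ * ↑δ))))) :=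
          (MT2.mean_const _).symm
        have e2 : Ab g₀ g₂ g₃ = MT2.mean (fun α : ↥Z => MT2.mean (fun _β : ↥Z =>
            MT2.mean (fun γ : ↥Z => MT2.mean (fun δ : ↥Z => c (g₀ * ↑α) (g₂ * ↑γ) (g₃ * ↑δ))))) :=
          congrArg MT2.mean (funext fun α => (MT2.mean_const _).symm)
        have e3 : Ab g₀ g₁ g₃ = MT2.mean (fun α : ↥Z => MT2.mean (fun β : ↥Z =>
            MT2.mean (fun _γ : ↥Z => MT2.mean (fun δ : ↥Z => c (g₀ * ↑α) (g₁ * ↑β) (g₃ * ↑δ))))) :=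
          congrArg MT2.mean (funext fun α => congrArg MT2.mean (funext fun β =>
            (MT2.mean_const _).symm))
        have e4 : Ab g₀ g₁ g₂ = MT2.mean (fun α : ↥Z => MT2.mean (fun β : ↥Z =>
            MT2.mean (fun γ : ↥Z => MT2.mean (fun _δ : ↥Z => c (g₀ * ↑α) (g₁ * ↑β) (g₂ * ↑γ))))) :=
          congrArg MT2.mean (funext fun α => congrArg MT2.mean (funext fun β =>
            congrArg MT2.mean (funext fun γ => (MT2.mean_const _).symm)))
        rw [e1, e2, e3, e4]
        refine ((MT2.comb4 ⟨Cc, fun _ => mB fun _ => mB fun _ => mB fun _ => hCc _ _ _⟩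
          ⟨Cc, fun _ => mB fun _ => mB fun _ => mB fun _ => hCc _ _ _⟩
          ⟨Cc, fun _ => mB fun _ => mB fun _ => mB fun _ => hCc _ _ _⟩
          ⟨Cc, fun _ => mB fun _ => mB fun _ => mB fun _ => hCc _ _ _⟩).symm.trans ?_)
        show MT2.mean (fun α : ↥Z =>
            MT2.mean (fun β : ↥Z =>
                MT2.mean (fun γ : ↥Z => MT2.mean (fun δ : ↥Z => c (g₁ * ↑β) (g₂ * ↑γ) (g₃ * ↑δ))))
              - MT2.mean (fun _β : ↥Z =>
                MT2.mean (fun γ : ↥Z => MT2.mean (fun δ : ↥Z => c (g₀ * ↑α) (g₂ * ↑γ) (g₃ * ↑δ))))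
              + MT2.mean (fun β : ↥Z =>
                MT2.mean (fun _γ : ↥Z => MT2.mean (fun δ : ↥Z => c (g₀ * ↑α) (g₁ * ↑β) (g₃ * ↑δ))))
              - MT2.mean (fun β : ↥Z =>
                MT2.mean (fun γ : ↥Z => MT2.mean (fun _δ : ↥Z => c (g₀ * ↑α) (g₁ * ↑β) (g₂ * ↑γ)))))
            = 0
        have h0 : (fun α : ↥Z =>
            MT2.mean (fun β : ↥Z =>
                MT2.mean (fun γ : ↥Z => MT2.mean (fun δ : ↥Z => c (g₁ * ↑β) (g₂ * ↑γ) (g₃ * ↑δ))))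
              - MT2.mean (fun _β : ↥Z =>
                MT2.mean (fun γ : ↥Z => MT2.mean (fun δ : ↥Z => c (g₀ * ↑α) (g₂ * ↑γ) (g₃ * ↑δ))))
              + MT2.mean (fun β : ↥Z =>
                MT2.mean (fun _γ : ↥Z => MT2.mean (fun δ : ↥Z => c (g₀ * ↑α) (g₁ * ↑β) (g₃ * ↑δ))))
              - MT2.mean (fun β : ↥Z =>
                MT2.mean (fun γ : ↥Z => MT2.mean (fun _δ : ↥Z => c (g₀ * ↑α) (g₁ * ↑β) (g₂ * ↑γ)))))
            = fun _ => (0 : ℝ) :=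
          funext fun α => L2 α
        rw [h0]
        exact MT2.mean_const 0
      -- the primitives u, v
      set u : G → G → ℝ := fun x y => MT2.mean (fun a : ↥Z => c (x * ↑a) x y) with hu
      set v : G → G → ℝ := fun x y => MT2.mean (fun a : ↥Z => MT2.mean
        (fun b : ↥Z => c (x * ↑a) (y * ↑b) y)) with hv
      have huB : ∀ x y, |u x y| ≤ Cc := fun x y => mB (fun a => hCc _ _ _)
      have hvB : ∀ x y, |v x y| ≤ Cc := fun x y => mB (fun a => mB (fun b => hCc _ _ _))
      have huH : ∀ h x y : G, u (x * h) (y * h) = u x y := by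
        intro h x y
        show MT2.mean _ = MT2.mean _
        refine congrArg MT2.mean (funext fun a => ?_)
        rw [hmove x h a]
        exact hH h (x * ↑a) x y
      have hvH : ∀ h x y : G, v (x * h) (y * h) = v x y := by
        intro h x y
        show MT2.mean _ = MT2.mean _
        refine congrArg MT2.mean (funext fun a => congrArg MT2.mean (funext fun b => ?_))
        rw [hmove x h a, hmove y h b]
        exact hH h (x * ↑a) (y * ↑b) y
      -- the prism homotopy identity
      have main : ∀ g₀ g₁ g₂ : G, Ab g₀ g₁ g₂
          = c g₀ g₁ g₂ + u g₀ g₂ - u g₀ g₁ - v g₀ g₂ + v g₀ g₁ + v g₁ g₂ - u g₁ g₂ := by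
        intro g₀ g₁ g₂
        have S1 : ∀ a b : ↥Z, MT2.mean (fun cc : ↥Z => c (g₀ * ↑a) (g₁ * ↑b) (g₂ * ↑cc))
            = (c g₀ g₁ g₂ - c (g₁ * ↑b) g₁ g₂ + c (g₀ * ↑a) g₀ g₂ - c (g₀ * ↑a) g₀ g₁
                + c (g₀ * ↑a) (g₁ * ↑b) g₁)
              + (MT2.mean (fun cc : ↥Z => c (g₁ * ↑b) (g₂ * ↑cc) g₂)
                - MT2.mean (fun cc : ↥Z => c (g₀ * ↑a) (g₂ * ↑cc) g₂)) := by
          intro a b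
          have hint : (fun cc : ↥Z => c (g₀ * ↑a) (g₁ * ↑b) (g₂ * ↑cc)) = fun cc : ↥Z =>
              (c g₀ g₁ g₂ - c (g₁ * ↑b) g₁ g₂ + c (g₀ * ↑a) g₀ g₂ - c (g₀ * ↑a) g₀ g₁
                + c (g₀ * ↑a) (g₁ * ↑b) g₁)
              + (c (g₁ * ↑b) (g₂ * ↑cc) g₂ - c (g₀ * ↑a) (g₂ * ↑cc) g₂) := by
            funext cc
            have h1 := hcoc (g₀ * ↑a) g₀ g₁ g₂
            have h2 := hcoc (g₀ * ↑a) (g₁ * ↑b) g₁ g₂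
            have h3 := hcoc (g₀ * ↑a) (g₁ * ↑b) (g₂ * ↑cc) g₂
            simp only [d2] at h1 h2 h3
            linarith
          rw [hint, MT2.mean_const_add _ ⟨Cc + Cc, fun cc =>
            (abs_sub _ _).trans (add_le_add (hCc _ _ _) (hCc _ _ _))⟩,
            MT2.mean_sub ⟨Cc, fun _ => hCc _ _ _⟩ ⟨Cc, fun _ => hCc _ _ _⟩]
        have S2 : ∀ a : ↥Z,
            MT2.mean (fun b : ↥Z => MT2.mean (fun cc : ↥Z => c (g₀ * ↑a) (g₁ * ↑b) (g₂ * ↑cc)))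
            = (c g₀ g₁ g₂ + c (g₀ * ↑a) g₀ g₂ - c (g₀ * ↑a) g₀ g₁
                - MT2.mean (fun cc : ↥Z => c (g₀ * ↑a) (g₂ * ↑cc) g₂) + v g₁ g₂ - u g₁ g₂)
              + MT2.mean (fun b : ↥Z => c (g₀ * ↑a) (g₁ * ↑b) g₁) := by
          intro a
          have hint : (fun b : ↥Z =>
              MT2.mean (fun cc : ↥Z => c (g₀ * ↑a) (g₁ * ↑b) (g₂ * ↑cc)))
              = fun b : ↥Z => (c g₀ g₁ g₂ + c (g₀ * ↑a) g₀ g₂ - c (g₀ * ↑a) g₀ g₁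
                  - MT2.mean (fun cc : ↥Z => c (g₀ * ↑a) (g₂ * ↑cc) g₂))
                + ((c (g₀ * ↑a) (g₁ * ↑b) g₁
                    + MT2.mean (fun cc : ↥Z => c (g₁ * ↑b) (g₂ * ↑cc) g₂))
                  - c (g₁ * ↑b) g₁ g₂) := by
            funext b
            rw [S1 a b]
            ring
          rw [hint, MT2.mean_const_add _ ⟨(Cc + Cc) + Cc, fun b => by
              refine (abs_sub _ _).trans (add_le_add ((abs_add_le _ _).trans
                (add_le_add (hCc _ _ _) (mB fun _ => hCc _ _ _))) (hCc _ _ _))⟩,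
            MT2.mean_sub ⟨Cc + Cc, fun b => (abs_add_le _ _).trans
              (add_le_add (hCc _ _ _) (mB fun _ => hCc _ _ _))⟩ ⟨Cc, fun _ => hCc _ _ _⟩,
            MT2.mean_add ⟨Cc, fun _ => hCc _ _ _⟩ ⟨Cc, fun _ => mB fun _ => hCc _ _ _⟩]
          have hv12 : v g₁ g₂
              = MT2.mean (fun b : ↥Z => MT2.mean (fun cc : ↥Z => c (g₁ * ↑b) (g₂ * ↑cc) g₂)) := rfl
          have hu12 : u g₁ g₂ = MT2.mean (fun b : ↥Z => c (g₁ * ↑b) g₁ g₂) := rfl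
          rw [hv12, hu12]
          ring
        have hint2 : (fun a : ↥Z =>
            MT2.mean (fun b : ↥Z => MT2.mean (fun cc : ↥Z => c (g₀ * ↑a) (g₁ * ↑b) (g₂ * ↑cc))))
            = fun a : ↥Z => (c g₀ g₁ g₂ + v g₁ g₂ - u g₁ g₂)
              + (((c (g₀ * ↑a) g₀ g₂ - c (g₀ * ↑a) g₀ g₁)
                  - MT2.mean (fun cc : ↥Z => c (g₀ * ↑a) (g₂ * ↑cc) g₂))
                + MT2.mean (fun b : ↥Z => c (g₀ * ↑a) (g₁ * ↑b) g₁)) := by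
          funext a
          rw [S2 a]
          ring
        show MT2.mean (fun a : ↥Z => MT2.mean (fun b : ↥Z =>
            MT2.mean (fun cc : ↥Z => c (g₀ * ↑a) (g₁ * ↑b) (g₂ * ↑cc)))) = _
        rw [hint2, MT2.mean_const_add _ ⟨((Cc + Cc) + Cc) + Cc, fun a => by
            refine (abs_add_le _ _).trans (add_le_add ((abs_sub _ _).trans (add_le_add
              ((abs_sub _ _).trans (add_le_add (hCc _ _ _) (hCc _ _ _)))
              (mB fun _ => hCc _ _ _))) (mB fun _ => hCc _ _ _))⟩,
          MT2.mean_add ⟨(Cc + Cc) + Cc, fun a => (abs_sub _ _).trans (add_le_add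
            ((abs_sub _ _).trans (add_le_add (hCc _ _ _) (hCc _ _ _)))
            (mB fun _ => hCc _ _ _))⟩ ⟨Cc, fun _ => mB fun _ => hCc _ _ _⟩,
          MT2.mean_sub ⟨Cc + Cc, fun a => (abs_sub _ _).trans
            (add_le_add (hCc _ _ _) (hCc _ _ _))⟩ ⟨Cc, fun _ => mB fun _ => hCc _ _ _⟩,
          MT2.mean_sub ⟨Cc, fun _ => hCc _ _ _⟩ ⟨Cc, fun _ => hCc _ _ _⟩]
        have hu02 : u g₀ g₂ = MT2.mean (fun a : ↥Z => c (g₀ * ↑a) g₀ g₂) := rfl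
        have hu01 : u g₀ g₁ = MT2.mean (fun a : ↥Z => c (g₀ * ↑a) g₀ g₁) := rfl
        have hv02 : v g₀ g₂ = MT2.mean (fun a : ↥Z =>
            MT2.mean (fun cc : ↥Z => c (g₀ * ↑a) (g₂ * ↑cc) g₂)) := rfl
        have hv01 : v g₀ g₁ = MT2.mean (fun a : ↥Z =>
            MT2.mean (fun b : ↥Z => c (g₀ * ↑a) (g₁ * ↑b) g₁)) := rfl
        rw [hu02, hu01, hv02, hv01]
        ring
      -- final assembly
      refine ⟨c'f, fun x y => u x y - v x y, ?_, ?_, ?_, ?_, ?_, ?_⟩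
      · intro h q₀ q₁ q₂
        obtain ⟨g₀, rfl⟩ := QuotientGroup.mk_surjective q₀
        obtain ⟨g₁, rfl⟩ := QuotientGroup.mk_surjective q₁
        obtain ⟨g₂, rfl⟩ := QuotientGroup.mk_surjective q₂
        obtain ⟨hh, rfl⟩ := QuotientGroup.mk_surjective h
        rw [← QuotientGroup.mk_mul, ← QuotientGroup.mk_mul, ← QuotientGroup.mk_mul,
          hc'mk, hc'mk, hAbH]
      · exact ⟨Cc, fun q₀ q₁ q₂ => hAbB _ _ _⟩
      · intro q₀ q₁ q₂ q₃
        show c'f q₁ q₂ q₃ - c'f q₀ q₂ q₃ + c'f q₀ q₁ q₃ - c'f q₀ q₁ q₂ = 0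
        exact hAbcoc _ _ _ _
      · intro h x y
        show u (x * h) (y * h) - v (x * h) (y * h) = u x y - v x y
        rw [huH, hvH]
      · exact ⟨Cc + Cc, fun x y => (abs_sub _ _).trans (add_le_add (huB _ _) (hvB _ _))⟩
      · intro g₀ g₁ g₂
        rw [hc'mk]
        show c g₀ g₁ g₂ - Ab g₀ g₁ g₂
          = (u g₁ g₂ - v g₁ g₂) - (u g₀ g₂ - v g₀ g₂) + (u g₀ g₁ - v g₀ g₁)
        rw [main]
        ring
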